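/- Let V, W be finite-dimensional complex vector spaces, N ∈ End(W) with N^k = 0, and g(z) = Σ g_i z^i ∈ G_k(V). Then for all (Q,P) ∈ Hom(W,V) ⊕ Hom(V,W): Ker(g·Q) ∩ Ker N = Ker Q ∩ Ker N and Im(g·P) + Im N = Im P + Im N, where g·Q = Σ_i g_i Q N^i and g·P = Σ_i N^i P (g^{-1})_i. Consequently, the set of stable pairs (Q,P) is invariant under the G_k(V)-action. -/

import Mathlib

/-- for `N^k = 0` and `g ∈ G_k(V)` with inverse coefficients `h`,
`Ker(g·Q) ∩ Ker N = Ker Q ∩ Ker N` and `Im(g·P) + Im N = Im P + Im N`; consequently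
stability of `(Q,P)` is preserved by the `G_k(V)`-action. -/
theorem stmt9
    (V W : Type*) [AddCommGroup V] [Module ℂ V] [FiniteDimensional ℂ V]
    [AddCommGroup W] [Module ℂ W] [FiniteDimensional ℂ W]
    (k : ℕ) (hk : 0 < k) (N : Module.End ℂ W) (hN : N ^ k = 0)
    (g h : ℕ → Module.End ℂ V)
    (hinv1 : ∀ l, l < k →
      ∑ i ∈ Finset.range (l + 1), h i * g (l - i) = if l = 0 then 1 else 0)
    (hinv2 : ∀ l, l < k →
      ∑ i ∈ Finset.range (l + 1), g i * h (l - i) = if l = 0 then 1 else 0)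
    (Q : W →ₗ[ℂ] V) (P : V →ₗ[ℂ] W) :
    LinearMap.ker (∑ i ∈ Finset.range k,
        (g i) ∘ₗ Q ∘ₗ ((N ^ i : Module.End ℂ W) : W →ₗ[ℂ] W)) ⊓ LinearMap.ker N
      = LinearMap.ker Q ⊓ LinearMap.ker N ∧
    LinearMap.range (∑ i ∈ Finset.range k,
        ((N ^ i : Module.End ℂ W) : W →ₗ[ℂ] W) ∘ₗ P ∘ₗ (h i)) ⊔ LinearMap.range N
      = LinearMap.range P ⊔ LinearMap.range N ∧
    ((LinearMap.ker Q ⊓ LinearMap.ker N = ⊥ ∧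
        LinearMap.range P ⊔ LinearMap.range N = ⊤) →
      (LinearMap.ker (∑ i ∈ Finset.range k,
          (g i) ∘ₗ Q ∘ₗ ((N ^ i : Module.End ℂ W) : W →ₗ[ℂ] W)) ⊓ LinearMap.ker N = ⊥ ∧
        LinearMap.range (∑ i ∈ Finset.range k,
          ((N ^ i : Module.End ℂ W) : W →ₗ[ℂ] W) ∘ₗ P ∘ₗ (h i)) ⊔ LinearMap.range N = ⊤)) := by

  have hh0g0 : h 0 * g 0 = 1 := by simpa using hinv1 0 hk
  set S := ∑ i ∈ Finset.range k,
      (g i) ∘ₗ Q ∘ₗ ((N ^ i : Module.End ℂ W) : W →ₗ[ℂ] W) with hS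
  set T := ∑ i ∈ Finset.range k,
      ((N ^ i : Module.End ℂ W) : W →ₗ[ℂ] W) ∘ₗ P ∘ₗ (h i) with hT
  have hSx : ∀ x : W, N x = 0 → S x = g 0 (Q x) := by
    intro x hx
    rw [hS, LinearMap.sum_apply,
      Finset.sum_eq_single_of_mem 0 (Finset.mem_range.2 hk)]
    · simp
    · intro i _ hi0
      obtain ⟨j, rfl⟩ := Nat.exists_eq_succ_of_ne_zero hi0
      have hz : (N ^ (j + 1)) x = 0 := by
        rw [pow_succ, Module.End.mul_apply, hx, map_zero]
      simp [LinearMap.comp_apply, hz]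
  have hker : LinearMap.ker S ⊓ LinearMap.ker N = LinearMap.ker Q ⊓ LinearMap.ker N := by
    ext x
    simp only [Submodule.mem_inf, LinearMap.mem_ker]
    constructor
    · rintro ⟨h1, h2⟩
      refine ⟨?_, h2⟩
      have hg : g 0 (Q x) = 0 := by rw [← hSx x h2, h1]
      have : Q x = h 0 (g 0 (Q x)) := by
        rw [← Module.End.mul_apply, hh0g0, Module.End.one_apply]
      rw [this, hg, map_zero]
    · rintro ⟨h1, h2⟩
      exact ⟨by rw [hSx x h2, h1, map_zero], h2⟩
  obtain ⟨m, rfl⟩ : ∃ m, k = m + 1 := ⟨k - 1, (Nat.succ_pred_eq_of_pos hk).symm⟩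
  have hTx : ∀ x : V, T x = P (h 0 x)
      + ∑ i ∈ Finset.range m, (N ^ (i + 1)) (P (h (i + 1) x)) := by
    intro x
    rw [hT, LinearMap.sum_apply, Finset.sum_range_succ']
    simp [LinearMap.comp_apply, add_comm]
  have hmemN : ∀ (x : V), (∑ i ∈ Finset.range m, (N ^ (i + 1)) (P (h (i + 1) x)))
      ∈ LinearMap.range N := by
    intro x
    refine Submodule.sum_mem _ fun i _ => ⟨(N ^ i) (P (h (i + 1) x)), ?_⟩
    rw [← Module.End.mul_apply, ← pow_succ']
  have hrange : LinearMap.range T ⊔ LinearMap.range N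
      = LinearMap.range P ⊔ LinearMap.range N := by
    apply le_antisymm
    · refine sup_le ?_ le_sup_right
      rintro _ ⟨x, rfl⟩
      rw [hTx]
      exact Submodule.add_mem _ (Submodule.mem_sup_left ⟨h 0 x, rfl⟩)
        (Submodule.mem_sup_right (hmemN x))
    · refine sup_le ?_ le_sup_right
      rintro _ ⟨v, rfl⟩
      have hv : h 0 (g 0 v) = v := by
        rw [← Module.End.mul_apply, hh0g0, Module.End.one_apply]
      have hPv : P v = T (g 0 v)
          - ∑ i ∈ Finset.range m, (N ^ (i + 1)) (P (h (i + 1) (g 0 v))) := by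
        rw [hTx, hv]; abel
      rw [hPv]
      exact Submodule.sub_mem _ (Submodule.mem_sup_left ⟨g 0 v, rfl⟩)
        (Submodule.mem_sup_right (hmemN (g 0 v)))
  refine ⟨hker, hrange, fun ⟨h1, h2⟩ => ⟨by rw [hker]; exact h1, by rw [hrange]; exact h2⟩⟩
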